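/- Let c_1, …, c_{2n} ∈ K(f) be distinct elements such that F_j(c_k) ≠ 0 for all j, k, and set h_{j,k}(t) := F'_j(c_k)/F_j(c_k) ∈ K(t), where F'_j denotes the derivative of F_j with respect to x. If (e_1, …, e_r) ∈ {0,1}^r is such that ∑_{j=1}^r e_j · h_{j,k}(t) ∈ L_i for every k = 1, …, 2n, then the polynomial ∏_{j=1}^r F_j^{e_j} has all its coefficients in L_i, i.e., ∏_{j=1}^r F_j^{e_j} ∈ L_i[x]. -/
import Mathlib


open Polynomial

/-- `Φ_g(x) := g_n(x) − g(t)·g_d(x) ∈ K(t)[x]`, where `g = g_n/g_d` with `g_n, g_d` coprime. -/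
noncomputable def Phi {K : Type*} [Field K] (g : RatFunc K) : Polynomial (RatFunc K) :=
  g.num.map (algebraMap K (RatFunc K)) - Polynomial.C g * (g.denom.map (algebraMap K (RatFunc K)))

/-- A rational function is nonconstant if it is not of the form `C c`. -/
def Nonconst {K : Type*} [Field K] (g : RatFunc K) : Prop := ∀ c : K, g ≠ RatFunc.C c

/-- The `i`-th principal subfield `L_i := { g ∈ K(t) : F_i ∣ Φ_g } ∪ K` as a set. -/
def Lset {K : Type*} [Field K] (F : Polynomial (RatFunc K)) : Set (RatFunc K) :=
  {g : RatFunc K | F ∣ Phi g ∨ ∃ c : K, g = RatFunc.C c}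

lemma aux_const {K : Type*} [Field K] (f : RatFunc K) (h1 : f.num.natDegree = 0)
    (h2 : f.denom.natDegree = 0) : ∃ a : K, f = RatFunc.C a := by
  obtain ⟨a, ha⟩ := Polynomial.natDegree_eq_zero.mp h1
  obtain ⟨b, hb⟩ := Polynomial.natDegree_eq_zero.mp h2
  refine ⟨a / b, ?_⟩
  conv_lhs => rw [← RatFunc.num_div_denom f, ← ha, ← hb]
  rw [RatFunc.algebraMap_C, RatFunc.algebraMap_C, ← map_div₀ (RatFunc.C (K := K))]

lemma aux_trans {K : Type*} [Field K] (f : RatFunc K) (hf : Nonconst f) :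
    Transcendental K f := by
  intro halg
  have hint : IsIntegral K f := halg.isIntegral
  have hf0 : f ≠ 0 := by
    intro h
    exact hf 0 (by rw [h, map_zero])
  set q := minpoly K f with hq
  have hqmonic : q.Monic := minpoly.monic hint
  have hq0 : q.coeff 0 ≠ 0 := minpoly.coeff_zero_ne_zero hint hf0
  set N := q.natDegree with hN
  set u := f.num with hu
  set v := f.denom with hv
  have hw0 : algebraMap K[X] (RatFunc K) v ≠ 0 := RatFunc.algebraMap_ne_zero f.denom_ne_zero
  have hA : algebraMap K[X] (RatFunc K) u = f * algebraMap K[X] (RatFunc K) v := by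
    have h := RatFunc.num_div_denom f
    rw [div_eq_iff hw0] at h
    exact h
  have key : (∑ i ∈ Finset.range (N + 1), Polynomial.C (q.coeff i) * u ^ i * v ^ (N - i)) = 0 := by
    apply IsFractionRing.injective K[X] (RatFunc K)
    rw [map_zero, map_sum]
    have : ∀ i ∈ Finset.range (N + 1),
        algebraMap K[X] (RatFunc K) (Polynomial.C (q.coeff i) * u ^ i * v ^ (N - i)) =
        (RatFunc.C (q.coeff i) * f ^ i) * (algebraMap K[X] (RatFunc K) v) ^ N := by
      intro i hi
      rw [Finset.mem_range, Nat.lt_succ_iff] at hi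
      rw [map_mul, map_mul, map_pow, map_pow, RatFunc.algebraMap_C, hA, mul_pow,
        show N = i + (N - i) from (Nat.add_sub_cancel' hi).symm, pow_add]
      ring_nf
      congr 1
      congr 1
      omega
    rw [Finset.sum_congr rfl this, ← Finset.sum_mul]
    have haq : (∑ i ∈ Finset.range (N + 1), RatFunc.C (q.coeff i) * f ^ i)
        = Polynomial.aeval f q := by
      rw [Polynomial.aeval_eq_sum_range]
      exact Finset.sum_congr rfl fun i _ => by rw [Algebra.smul_def, RatFunc.algebraMap_eq_C]
    rw [haq, minpoly.aeval, zero_mul]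
  -- v divides u ^ N
  have huN : u ^ N = -(∑ i ∈ Finset.range N, Polynomial.C (q.coeff i) * u ^ i * v ^ (N - i)) := by
    have := key
    rw [Finset.sum_range_succ] at this
    rw [Nat.sub_self, pow_zero, mul_one, hqmonic.coeff_natDegree, Polynomial.C_1, one_mul] at this
    linear_combination this
  have hvN : v ∣ u ^ N := by
    rw [huN]
    exact dvd_neg.mpr (Finset.dvd_sum fun i hi => dvd_mul_of_dvd_right
      (dvd_pow_self v (Nat.sub_ne_zero_of_lt (Finset.mem_range.mp hi))) _)
  have hvunit : IsUnit v := ((IsCoprime.pow_left (RatFunc.isCoprime_num_denom f) : IsCoprime (u ^ N) v)).isUnit_of_dvd'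
    hvN dvd_rfl
  -- u divides C (q.coeff 0)
  have huC0 : Polynomial.C (q.coeff 0) * v ^ N =
      -(∑ i ∈ Finset.range N, Polynomial.C (q.coeff (i + 1)) * u ^ (i + 1) * v ^ (N - (i + 1))) := by
    have := key
    rw [Finset.sum_range_succ'] at this
    rw [pow_zero, mul_one, Nat.sub_zero] at this
    linear_combination this
  have hudvd : u ∣ Polynomial.C (q.coeff 0) * v ^ N := by
    rw [huC0]
    exact dvd_neg.mpr (Finset.dvd_sum fun i _ => dvd_mul_of_dvd_left
      (dvd_mul_of_dvd_right (dvd_pow_self u i.succ_ne_zero) _) _)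
  have huC : u ∣ Polynomial.C (q.coeff 0) :=
    ((IsCoprime.pow_right (RatFunc.isCoprime_num_denom f) : IsCoprime u (v ^ N))).dvd_of_dvd_mul_right hudvd
  have hund : u.natDegree = 0 := by
    have := Polynomial.natDegree_le_of_dvd huC (by simpa using hq0)
    simpa using this
  have hvnd : v.natDegree = 0 := Polynomial.natDegree_eq_zero_of_isUnit hvunit
  obtain ⟨a, ha⟩ := aux_const f hund hvnd
  exact hf a ha

lemma aux_logderiv {R : Type*} [Field R] {ι : Type*} [DecidableEq ι] (s : Finset ι)
    (f : ι → Polynomial R) (x : R) (h : ∀ j ∈ s, (f j).eval x ≠ 0) :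
    (Polynomial.derivative (∏ j ∈ s, f j)).eval x =
      (∏ j ∈ s, f j).eval x * ∑ j ∈ s, (Polynomial.derivative (f j)).eval x / (f j).eval x := by
  induction s using Finset.cons_induction with
  | empty => simp
  | cons a s ha ih =>
    have hne_a : (f a).eval x ≠ 0 := h a (Finset.mem_cons_self a s)
    have ih' := ih fun j hj => h j (Finset.mem_cons_of_mem hj)
    rw [Finset.prod_cons, Finset.sum_cons, derivative_mul, eval_add, eval_mul, eval_mul,
      eval_mul, ih', mul_add, mul_comm ((f a).eval x) ((∏ j ∈ s, f j).eval x), mul_assoc,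
      mul_div_cancel₀ _ hne_a]
    ring

/-- Let `c_1, …, c_{2n} ∈ K(f)` be distinct with `F_j(c_k) ≠ 0`, and set
`h_{j,k} := F_j'(c_k)/F_j(c_k)`.  If `(e_1,…,e_r) ∈ {0,1}^r` is such that
`∑_j e_j h_{j,k} ∈ L_i` for all `k = 1, …, 2n`, then `∏_j F_j^{e_j} ∈ L_i[x]`. -/
theorem stmt_12 {K : Type*} [Field K] (f : RatFunc K) (hf : Nonconst f)
    (hmonic : (Phi f).Monic) (hsep : (Phi f).Separable)
    (r : ℕ) (hr : 0 < r) (F : Fin r → Polynomial (RatFunc K))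
    (hFm : ∀ j, (F j).Monic) (hFirr : ∀ j, Irreducible (F j))
    (hfact : Phi f = ∏ j, F j)
    (hF1 : F ⟨0, hr⟩ = Polynomial.X - Polynomial.C RatFunc.X)
    (n : ℕ) (hn : n = max f.num.natDegree f.denom.natDegree)
    (c : Fin (2 * n) → RatFunc K)
    (hcmem : ∀ k, c k ∈ IntermediateField.adjoin K {f})
    (hcinj : Function.Injective c)
    (hcne : ∀ j k, (F j).eval (c k) ≠ 0)
    (i : Fin r) (e : Fin r → ℕ) (he : ∀ j, e j = 0 ∨ e j = 1)
    (hsum : ∀ k, (∑ j, (e j : RatFunc K) *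
        ((Polynomial.derivative (F j)).eval (c k) / (F j).eval (c k))) ∈ Lset (F i)) :
    ∀ m, (∏ j, (F j) ^ (e j)).coeff m ∈ Lset (F i) := by
  classical
  set Ω := AlgebraicClosure (RatFunc K) with hΩ
  set ι : RatFunc K →+* Ω := algebraMap (RatFunc K) Ω with hι
  -- a root β of F i in Ω
  obtain ⟨β, hβ⟩ := IsAlgClosed.exists_aeval_eq_zero Ω (F i)
    (Polynomial.degree_pos_of_irreducible (hFirr i)).ne'
  have hmin : minpoly (RatFunc K) β = F i :=
    (minpoly.eq_of_irreducible_of_monic (hFirr i) hβ (hFm i)).symm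
  -- evaluation of Phi g at β
  have hPhieval : ∀ g : RatFunc K, (Polynomial.aeval β (Phi g) : Ω) =
      Polynomial.aeval β g.num - ι g * Polynomial.aeval β g.denom := by
    intro g
    unfold Phi
    rw [map_sub, map_mul, Polynomial.aeval_C, Polynomial.aeval_map_algebraMap,
      Polynomial.aeval_map_algebraMap]
  have hFidvd : F i ∣ Phi f := hfact ▸ Finset.dvd_prod_of_mem F (Finset.mem_univ i)
  have hPhif0 : Polynomial.aeval β (Phi f) = 0 := by
    obtain ⟨w, hw⟩ := hFidvd
    rw [hw, map_mul, hβ, zero_mul]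
  have hfden : Polynomial.aeval β f.denom ≠ 0 := by
    intro h0
    rw [hPhieval f, h0, mul_zero, sub_zero] at hPhif0
    obtain ⟨a, b, hab⟩ := RatFunc.isCoprime_num_denom f
    have := congrArg (Polynomial.aeval β) hab
    rw [map_add, map_mul, map_mul, hPhif0, h0, mul_zero, mul_zero, add_zero, map_one] at this
    exact zero_ne_one this
  -- β is transcendental over K
  have hβtr : Transcendental K β := by
    intro halg
    have hmem : ι f ∈ IntermediateField.adjoin K {β} := by
      have h1 : ι f = Polynomial.aeval β f.num / Polynomial.aeval β f.denom := by
        rw [hPhieval f] at hPhif0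
        rw [eq_div_iff hfden]
        linear_combination -hPhif0
      rw [h1, IntermediateField.mem_adjoin_simple_iff]
      exact ⟨f.num, f.denom, rfl⟩
    have : IsAlgebraic K (ι f) := by
      have := IntermediateField.isAlgebraic_adjoin_simple halg.isIntegral
      have := Algebra.IsAlgebraic.isAlgebraic (R := K)
        (⟨ι f, hmem⟩ : IntermediateField.adjoin K {β})
      exact (IntermediateField.isAlgebraic_iff).mp this
    exact aux_trans f hf
      ((isAlgebraic_algHom_iff (IsScalarTower.toAlgHom K (RatFunc K) Ω)
        (algebraMap (RatFunc K) Ω).injective (a := f)).mp this)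
  have hden_ne : ∀ p : K[X], p ≠ 0 → Polynomial.aeval β p ≠ 0 :=
    fun p hp h0 => hβtr ⟨p, hp, h0⟩
  -- the embedding σ : K(t) → Ω sending t to β
  have hφinj : Function.Injective (Polynomial.aeval β : K[X] →ₐ[K] Ω) :=
    transcendental_iff_injective.mp hβtr
  set σ : RatFunc K →ₐ[K] Ω := RatFunc.liftAlgHom (Polynomial.aeval β)
    (nonZeroDivisors_le_comap_nonZeroDivisors_of_injective _ hφinj) with hσdef
  have hσ : ∀ g : RatFunc K, σ g * Polynomial.aeval β g.denom = Polynomial.aeval β g.num := by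
    intro g
    have := RatFunc.liftAlgHom_apply_div (Polynomial.aeval β)
      (nonZeroDivisors_le_comap_nonZeroDivisors_of_injective _ hφinj) g.num g.denom
    rw [RatFunc.num_div_denom] at this
    rw [hσdef, this, div_mul_cancel₀ _ (hden_ne _ (RatFunc.denom_ne_zero g))]
  -- membership in Lset is equivalent to being fixed by σ
  have hLiff : ∀ g : RatFunc K, g ∈ Lset (F i) ↔ σ g = ι g := by
    intro g
    constructor
    · rintro (hdvd | ⟨a, rfl⟩)
      · obtain ⟨w, hw⟩ := hdvd
        have h0 : Polynomial.aeval β (Phi g) = 0 := by rw [hw, map_mul, hβ, zero_mul]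
        rw [hPhieval g] at h0
        have h1 := hσ g
        have h2 : Polynomial.aeval β g.denom ≠ 0 := hden_ne _ (RatFunc.denom_ne_zero g)
        have h3 : (σ g - ι g) * Polynomial.aeval β g.denom = 0 := by
          linear_combination h1 + h0
        rcases mul_eq_zero.mp h3 with h | h
        · exact sub_eq_zero.mp h
        · exact absurd h h2
      · rw [← RatFunc.algebraMap_eq_C]
        rw [AlgHom.commutes]
        exact (IsScalarTower.algebraMap_apply K (RatFunc K) Ω a).symm
    · intro hσg
      left
      rw [← hmin]
      apply minpoly.dvd
      rw [hPhieval g, ← hσg, ← hσ g]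
      ring
  -- σ and ι agree on K⟮f⟯, in particular on the c k
  have hσf : σ f = ι f := (hLiff f).mp (Or.inl hFidvd)
  have hσc : ∀ k, σ (c k) = ι (c k) := by
    intro k
    obtain ⟨p, q, hpq⟩ := (IntermediateField.mem_adjoin_simple_iff K (c k)).mp (hcmem k)
    have hcalc : ∀ τ : RatFunc K →ₐ[K] Ω,
        τ (c k) = Polynomial.aeval (τ f) p / Polynomial.aeval (τ f) q := by
      intro τ
      rw [hpq, map_div₀, Polynomial.aeval_algHom_apply, Polynomial.aeval_algHom_apply]
    have h2 := hcalc (IsScalarTower.toAlgHom K (RatFunc K) Ω)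
    rw [hcalc σ, hσf]
    exact h2.symm
  -- n is positive
  have hn1 : 0 < n := by
    rcases Nat.eq_zero_or_pos n with h0 | h
    · exfalso
      rw [h0] at hn
      obtain ⟨h1, h2⟩ := Nat.max_eq_zero_iff.mp hn.symm
      obtain ⟨a, ha⟩ := aux_const f h1 h2
      exact hf a ha
    · exact h
  -- the polynomial P
  set S : Finset (Fin r) := Finset.univ.filter (fun j => e j = 1) with hS
  set P : Polynomial (RatFunc K) := ∏ j, F j ^ e j with hPdef
  have hP : P = ∏ j ∈ S, F j := by
    rw [hPdef, hS, Finset.prod_filter]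
    exact Finset.prod_congr rfl fun j _ => by rcases he j with h | h <;> simp [h]
  have hPdvd : P ∣ Phi f := by
    rw [hfact, hP]
    exact Finset.prod_dvd_prod_of_subset _ _ _ (Finset.subset_univ S)
  have hPsep : P.Separable := hsep.of_dvd hPdvd
  have hPmonic : P.Monic := by
    rw [hP]; exact Polynomial.monic_prod_of_monic _ _ fun j _ => hFm j
  have hPhideg : (Phi f).natDegree ≤ n := by
    unfold Phi
    refine le_trans (Polynomial.natDegree_sub_le _ _) (max_le ?_ ?_)
    · exact le_trans (Polynomial.natDegree_map_le) (hn ▸ le_max_left _ _)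
    · exact le_trans (Polynomial.natDegree_C_mul_le _ _)
        (le_trans (Polynomial.natDegree_map_le) (hn ▸ le_max_right _ _))
  have hPdeg : P.natDegree ≤ n :=
    le_trans (Polynomial.natDegree_le_of_dvd hPdvd hmonic.ne_zero) hPhideg
  -- evaluations of P and its derivative
  have hPevalne : ∀ k, P.eval (c k) ≠ 0 := by
    intro k
    rw [hP, Polynomial.eval_prod]
    exact Finset.prod_ne_zero_iff.mpr fun j _ => hcne j k
  have hlog : ∀ k, (Polynomial.derivative P).eval (c k) = P.eval (c k) *
      ∑ j, (e j : RatFunc K) *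
        ((Polynomial.derivative (F j)).eval (c k) / (F j).eval (c k)) := by
    intro k
    have hseq : (∑ j ∈ S, ((Polynomial.derivative (F j)).eval (c k) / (F j).eval (c k)))
        = ∑ j, (e j : RatFunc K) *
          ((Polynomial.derivative (F j)).eval (c k) / (F j).eval (c k)) := by
      rw [hS, Finset.sum_filter]
      exact Finset.sum_congr rfl fun j _ => by rcases he j with h | h <;> simp [h]
    rw [hP, aux_logderiv S F (c k) (fun j _ => hcne j k), hseq]
  -- the two images of P in Ω[X]
  set A : Polynomial Ω := P.map ι with hAdef
  set B : Polynomial Ω := P.map (σ : RatFunc K →+* Ω) with hBdef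
  have hQ : A * Polynomial.derivative B - B * Polynomial.derivative A = 0 := by
    apply Polynomial.eq_zero_of_natDegree_lt_card_of_eval_eq_zero _
      (f := fun k => ι (c k)) (fun k l hkl => hcinj (ι.injective hkl))
    · intro k
      have hιP : A.eval (ι (c k)) = ι (P.eval (c k)) := by
        rw [hAdef, Polynomial.eval_map, Polynomial.eval₂_at_apply]
      have hσP : B.eval (ι (c k)) = σ (P.eval (c k)) := by
        rw [hBdef, ← hσc k, Polynomial.eval_map]
        exact Polynomial.eval₂_at_apply (σ : RatFunc K →+* Ω) (c k)
      have hιP' : (Polynomial.derivative A).eval (ι (c k))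
          = ι ((Polynomial.derivative P).eval (c k)) := by
        rw [hAdef, Polynomial.derivative_map, Polynomial.eval_map, Polynomial.eval₂_at_apply]
      have hσP' : (Polynomial.derivative B).eval (ι (c k))
          = σ ((Polynomial.derivative P).eval (c k)) := by
        rw [hBdef, ← hσc k, Polynomial.derivative_map, Polynomial.eval_map]
        exact Polynomial.eval₂_at_apply (σ : RatFunc K →+* Ω) (c k)
      have hhk := (hLiff _).mp (hsum k)
      have e1 : σ ((Polynomial.derivative P).eval (c k)) = σ (P.eval (c k)) *
          σ (∑ j, (e j : RatFunc K) *
            ((Polynomial.derivative (F j)).eval (c k) / (F j).eval (c k))) := by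
        rw [← map_mul, ← hlog k]
      have e2 : ι ((Polynomial.derivative P).eval (c k)) = ι (P.eval (c k)) *
          ι (∑ j, (e j : RatFunc K) *
            ((Polynomial.derivative (F j)).eval (c k) / (F j).eval (c k))) := by
        rw [← map_mul, ← hlog k]
      rw [Polynomial.eval_sub, Polynomial.eval_mul, Polynomial.eval_mul, hιP, hσP, hιP', hσP',
        e1, e2, hhk]
      ring
    · have hdA : A.natDegree ≤ n := le_trans (Polynomial.natDegree_map_le) hPdeg
      have hdB : B.natDegree ≤ n := le_trans (Polynomial.natDegree_map_le) hPdeg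
      have hdA' : (Polynomial.derivative A).natDegree ≤ n - 1 :=
        le_trans (Polynomial.natDegree_derivative_le _) (Nat.sub_le_sub_right hdA 1)
      have hdB' : (Polynomial.derivative B).natDegree ≤ n - 1 :=
        le_trans (Polynomial.natDegree_derivative_le _) (Nat.sub_le_sub_right hdB 1)
      have h1 : (A * Polynomial.derivative B).natDegree ≤ n + (n - 1) :=
        le_trans (Polynomial.natDegree_mul_le) (add_le_add hdA hdB')
      have h2 : (B * Polynomial.derivative A).natDegree ≤ n + (n - 1) :=
        le_trans (Polynomial.natDegree_mul_le) (add_le_add hdB hdA')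
      have h3 := le_trans (Polynomial.natDegree_sub_le (A * Polynomial.derivative B)
        (B * Polynomial.derivative A)) (max_le h1 h2)
      rw [Fintype.card_fin]
      omega
  -- conclude B = A
  have hAmonic : A.Monic := hPmonic.map _
  have hBmonic : B.Monic := hPmonic.map _
  have hAsep : A.Separable := hPsep.map
  have hAB : A ∣ B := by
    have h1 : A * Polynomial.derivative B = B * Polynomial.derivative A := by
      linear_combination hQ
    have h2 : A ∣ B * Polynomial.derivative A := ⟨Polynomial.derivative B, h1.symm⟩
    exact IsCoprime.dvd_of_dvd_mul_right hAsep h2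
  have hdegmap : ∀ τ : RatFunc K →+* Ω, (P.map τ).degree = P.degree := fun τ =>
    Polynomial.degree_map_eq_of_leadingCoeff_ne_zero τ
      (by rw [hPmonic.leadingCoeff, map_one]; exact one_ne_zero)
  have hdeg : B.degree = A.degree := by rw [hAdef, hBdef, hdegmap, hdegmap]
  have hsub : B - A = 0 := by
    have hlt : (B - A).degree < A.degree := by
      rw [← hdeg]
      exact Polynomial.degree_sub_lt hdeg hBmonic.ne_zero
        (by rw [hBmonic.leadingCoeff, hAmonic.leadingCoeff])
    exact Polynomial.eq_zero_of_dvd_of_degree_lt (dvd_sub hAB dvd_rfl) hlt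
  have hBA : B = A := sub_eq_zero.mp hsub
  -- conclusion
  intro m
  apply (hLiff _).mpr
  have hcm := congrArg (fun p : Polynomial Ω => p.coeff m) hBA
  simpa [hAdef, hBdef, Polynomial.coeff_map] using hcm
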